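/- Let G be a group, let U ⊆ G be a subset such that finitely many left translates of U cover G (i.e. there is a finite set F ⊆ G with G = ⋃_{a ∈ F} a·U), and let τ₀ be a topology on U. Suppose that for every a ∈ G the set (a·U) ∩ U is τ₀-open and the map x ↦ a·x from (a⁻¹·U) ∩ U to (a·U) ∩ U is τ₀-continuous. Then there is a topology τ on G such that: (i) U is τ-open and the subspace topology that τ induces on U equals τ₀; (ii) every left translation x ↦ a·x (a ∈ G) is τ-continuous; moreover the collection of sets of the form a·V, with a ∈ G and V ⊆ U τ₀-open, is a basis for τ. -/
import Mathlib


/-- Extending a suitably translation-compatible topology on a subset `U` of a group `G`,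
finitely many left translates of which cover `G`, to a left-invariant topology on `G`
in which `U` is open with its original topology, with basis the left translates of the
open subsets of `U`. -/
theorem stmt12 {G : Type*} [Group G] (U : Set G) (F : Finset G)
    (hcov : (⋃ a ∈ F, (fun x => a * x) '' U) = Set.univ)
    (τ₀ : TopologicalSpace ↥U)
    (hopen : ∀ a : G, @IsOpen ↥U τ₀ {x : ↥U | a⁻¹ * (x : G) ∈ U})
    (hcont : ∀ a : G,
      @Continuous {x : ↥U | a * (x : G) ∈ U} ↥U
        (TopologicalSpace.induced
          (Subtype.val : {x : ↥U | a * (x : G) ∈ U} → ↥U) τ₀) τ₀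
        (fun x => (⟨a * (x : G), x.2⟩ : ↥U))) :
    ∃ τ : TopologicalSpace G,
      (@IsOpen G τ U ∧ TopologicalSpace.induced (Subtype.val : ↥U → G) τ = τ₀) ∧
      (∀ a : G, @Continuous G G τ τ fun x => a * x) ∧
      @TopologicalSpace.IsTopologicalBasis G τ
        {S : Set G | ∃ (a : G) (V : Set ↥U), @IsOpen ↥U τ₀ V ∧
          S = (fun x => a * x) '' (Subtype.val '' V)} := by
  letI := τ₀
  set B : Set (Set G) :=
    {S : Set G | ∃ (a : G) (V : Set ↥U), IsOpen V ∧
      S = (fun x => a * x) '' (Subtype.val '' V)} with hB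
  set τ : TopologicalSpace G := TopologicalSpace.generateFrom B with hτ
  -- the key openness lemma
  have key : ∀ (c : G) (V : Set ↥U), IsOpen V →
      IsOpen {y : ↥U | ∃ h : c * (y : G) ∈ U, (⟨c * (y : G), h⟩ : ↥U) ∈ V} := by
    intro c V hV
    have hc := (hcont c).isOpen_preimage V hV
    rw [isOpen_induced_iff] at hc
    obtain ⟨O, hO, hOeq⟩ := hc
    have h1 : IsOpen {y : ↥U | c * (y : G) ∈ U} := by
      have := hopen c⁻¹
      simpa using this
    have : {y : ↥U | ∃ h : c * (y : G) ∈ U, (⟨c * (y : G), h⟩ : ↥U) ∈ V} =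
        {y : ↥U | c * (y : G) ∈ U} ∩ O := by
      ext y
      constructor
      · rintro ⟨h, hv⟩
        refine ⟨h, ?_⟩
        have : (⟨y, h⟩ : {x : ↥U | c * (x : G) ∈ U}) ∈
            (fun x : {x : ↥U | c * (x : G) ∈ U} => (⟨c * (x : G), x.2⟩ : ↥U)) ⁻¹' V := hv
        rw [← hOeq] at this
        exact this
      · rintro ⟨h, hOy⟩
        refine ⟨h, ?_⟩
        have : (⟨y, h⟩ : {x : ↥U | c * (x : G) ∈ U}) ∈
            Subtype.val ⁻¹' O := hOy
        rw [hOeq] at this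
        exact this
    rw [this]
    exact h1.inter hO
  -- preimage of a basis element under val is τ₀-open
  have pre : ∀ (a : G) (V : Set ↥U), IsOpen V →
      IsOpen ((Subtype.val : ↥U → G) ⁻¹' ((fun x => a * x) '' (Subtype.val '' V))) := by
    intro a V hV
    have : (Subtype.val : ↥U → G) ⁻¹' ((fun x => a * x) '' (Subtype.val '' V)) =
        {y : ↥U | ∃ h : a⁻¹ * (y : G) ∈ U, (⟨a⁻¹ * (y : G), h⟩ : ↥U) ∈ V} := by
      ext y
      constructor
      · rintro ⟨u, ⟨v, hvV, rfl⟩, huy⟩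
        have h1 : a⁻¹ * (y : G) = (v : G) := by
          rw [← huy]; group
        refine ⟨h1 ▸ v.2, ?_⟩
        convert hvV using 1
        exact Subtype.ext h1
      · rintro ⟨h, hv⟩
        exact ⟨a⁻¹ * (y : G), ⟨⟨a⁻¹ * (y : G), h⟩, hv, rfl⟩, by group⟩
    rw [this]
    exact key a⁻¹ V hV
  -- basis property
  have hbasis : @TopologicalSpace.IsTopologicalBasis G τ B := by
    refine ⟨?_, ?_, rfl⟩
    · rintro t₁ ⟨a, V₁, hV₁, rfl⟩ t₂ ⟨b, V₂, hV₂, rfl⟩ x ⟨⟨u₁, ⟨v₁, hv₁, rfl⟩, hx₁⟩, ⟨u₂, ⟨v₂, hv₂, rfl⟩, hx₂⟩⟩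
      set c : G := b⁻¹ * a with hc
      set W : Set ↥U := {y : ↥U | ∃ h : c * (y : G) ∈ U, (⟨c * (y : G), h⟩ : ↥U) ∈ V₂}
        with hW
      have hWopen : IsOpen W := key c V₂ hV₂
      refine ⟨(fun x => a * x) '' (Subtype.val '' (V₁ ∩ W)), ⟨a, V₁ ∩ W, hV₁.inter hWopen, rfl⟩,
        ?_, ?_⟩
      · refine ⟨(v₁ : G), ⟨v₁, ⟨hv₁, ?_⟩, rfl⟩, hx₁⟩
        have hab : a * (v₁ : G) = b * (v₂ : G) := hx₁.trans hx₂.symm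
        have hcv : c * (v₁ : G) = (v₂ : G) := by
          rw [hc]
          calc b⁻¹ * a * (v₁ : G) = b⁻¹ * (a * (v₁ : G)) := by group
            _ = b⁻¹ * (b * (v₂ : G)) := by rw [hab]
            _ = (v₂ : G) := by group
        refine ⟨hcv ▸ v₂.2, ?_⟩
        convert hv₂ using 1
        exact Subtype.ext hcv
      · rintro z ⟨u, ⟨v, ⟨hvV₁, h, hvW⟩, rfl⟩, rfl⟩
        constructor
        · exact ⟨(v : G), ⟨v, hvV₁, rfl⟩, rfl⟩
        · refine ⟨c * (v : G), ⟨⟨c * (v : G), h⟩, hvW, rfl⟩, ?_⟩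
          rw [hc]; group
    · rw [Set.sUnion_eq_univ_iff]
      intro x
      have : x ∈ (⋃ a ∈ F, (fun x => a * x) '' U) := by rw [hcov]; trivial
      simp only [Set.mem_iUnion] at this
      obtain ⟨a, _, u, hu, hax⟩ := this
      refine ⟨(fun x => a * x) '' (Subtype.val '' (Set.univ : Set ↥U)),
        ⟨a, Set.univ, isOpen_univ, rfl⟩, ⟨u, ⟨⟨u, hu⟩, trivial, rfl⟩, hax⟩⟩
  refine ⟨τ, ⟨?_, ?_⟩, ?_, hbasis⟩
  · -- U is open
    have : U = (fun x => (1 : G) * x) '' (Subtype.val '' (Set.univ : Set ↥U)) := by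
      ext x
      simp [Set.mem_image]
    rw [this]
    exact TopologicalSpace.GenerateOpen.basic _ ⟨1, Set.univ, isOpen_univ, rfl⟩
  · -- induced topology equals τ₀
    rw [hτ, induced_generateFrom_eq]
    apply le_antisymm
    · -- generateFrom ≤ τ₀ : every τ₀-open set is generated-open
      rw [TopologicalSpace.le_def]
      intro V hV
      have hVB : (Subtype.val : ↥U → G) ⁻¹' ((fun x => (1 : G) * x) ''
          (Subtype.val '' V)) = V := by
        have himg : (fun x => (1 : G) * x) '' (Subtype.val '' V) = Subtype.val '' V := by
          simp
        rw [himg, Set.preimage_image_eq _ Subtype.val_injective]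
      rw [← hVB]
      exact TopologicalSpace.GenerateOpen.basic _
        ⟨_, ⟨1, V, hV, rfl⟩, rfl⟩
    · -- τ₀ ≤ generateFrom : every generator is τ₀-open
      apply le_generateFrom
      rintro s ⟨t, ⟨a, V, hV, rfl⟩, rfl⟩
      exact pre a V hV
  · -- translations continuous
    intro a
    rw [hτ, continuous_generateFrom_iff]
    rintro s ⟨b, V, hV, rfl⟩
    have : (fun x => a * x) ⁻¹' ((fun x => b * x) '' (Subtype.val '' V)) =
        (fun x => (a⁻¹ * b) * x) '' (Subtype.val '' V) := by
      ext x
      constructor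
      · rintro ⟨u, hu, hux⟩
        refine ⟨u, hu, ?_⟩
        show a⁻¹ * b * u = x
        have hux' : b * u = a * x := hux
        rw [mul_assoc, hux']; group
      · rintro ⟨u, hu, rfl⟩
        refine ⟨u, hu, ?_⟩
        show b * u = a * (a⁻¹ * b * u)
        group
    rw [this]
    exact TopologicalSpace.GenerateOpen.basic _ ⟨a⁻¹ * b, V, hV, rfl⟩
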